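/- Let X = (x^(1),…,x^(N)) ∈ ℝ^{d×N} with labels y ∈ ℝ^N, and let a₁,…,a_m : [0,∞) → ℝ and w₁,…,w_m : [0,∞) → ℝ^d be differentiable curves solving the gradient flow of the two-layer linear network loss L({aᵢ},{wᵢ}) = (1/(2N)) Σ_{n=1}^N (y^(n) − Σ_{i=1}^m aᵢ·wᵢᵀx^(n))². Assume the strictly balanced initialization a(0)a(0)ᵀ = W(0)ᵀW(0), where a(0) = (a₁(0),…,a_m(0))ᵀ ∈ ℝ^m and W(0) = (w₁(0),…,w_m(0)) ∈ ℝ^{d×m}, and assume w̃(0) := Σ_{i=1}^m aᵢ(0)wᵢ(0) ≠ 0. Set w̃(t) = Σ_{i=1}^m aᵢ(t)wᵢ(t). If w̃(t) converges as t → ∞ to a limit w̃∞ satisfying Xᵀw̃∞ = y, then w̃∞ minimizes the function w ↦ ‖w‖^{3/2} − (3/2)·‖w̃(0)‖^{−1/2}·w̃(0)ᵀw over the set {w ∈ ℝ^d : Xᵀw = y}. -/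

import Mathlib

noncomputable def netLoss {d N m : ℕ} (X : Fin N → EuclideanSpace ℝ (Fin d))
    (y : Fin N → ℝ) (a : Fin m → ℝ) (w : Fin m → EuclideanSpace ℝ (Fin d)) : ℝ :=
  1 / (2 * N) * ∑ n, (y n - ∑ i, a i * ∑ j, w i j * X n j) ^ 2

open Real Filter Function
open scoped RealInnerProductSpace

lemma aux_a {d N m : ℕ} (X : Fin N → EuclideanSpace ℝ (Fin d)) (y : Fin N → ℝ)
    (A : Fin m → ℝ) (W : Fin m → EuclideanSpace ℝ (Fin d)) (i : Fin m) :
    HasDerivAt (fun b => netLoss X y (Function.update A i b) W)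
      (-((N:ℝ)⁻¹ * ∑ n, (y n - ∑ j, A j * ∑ k, W j k * X n k) * ∑ k, W i k * X n k)) (A i) := by
  set c : Fin m → Fin N → ℝ := fun j n => ∑ k, W j k * X n k with hc
  have hs : ∀ n, HasDerivAt (fun b => ∑ j, Function.update A i b j * c j n) (c i n) (A i) := by
    intro n
    have h1 : ∀ j : Fin m, HasDerivAt (fun b => Function.update A i b j * c j n)
        (if j = i then c j n else 0) (A i) := by
      intro j
      rcases eq_or_ne j i with h | h
      · subst h
        simp only [Function.update_self, if_pos rfl]
        simpa using (hasDerivAt_id (A j)).mul_const (c j n)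
      · simp only [Function.update_of_ne h, if_neg h]
        exact hasDerivAt_const _ _
    have := HasDerivAt.fun_sum (fun j (_ : j ∈ Finset.univ) => h1 j)
    simpa using this
  have h2 : ∀ n, HasDerivAt (fun b => (y n - ∑ j, Function.update A i b j * c j n) ^ 2)
      (2 * (y n - ∑ j, A j * c j n) * (-(c i n))) (A i) := by
    intro n
    have h3 := ((hasDerivAt_const (A i) (y n)).fun_sub (hs n)).fun_pow 2
    have h4 : (fun b => ∑ j, Function.update A i b j * c j n) (A i) = ∑ j, A j * c j n := by
      simp [Function.update_eq_self]
    simpa [h4] using h3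
  have h5 := (HasDerivAt.fun_sum (fun n (_ : n ∈ Finset.univ) => h2 n)).const_mul (1 / (2 * (N:ℝ)))
  have h6 : (1 / (2 * (N:ℝ))) * ∑ n, 2 * (y n - ∑ j, A j * c j n) * (-(c i n))
      = -((N:ℝ)⁻¹ * ∑ n, (y n - ∑ j, A j * c j n) * c i n) := by
    simp only [Finset.mul_sum, neg_mul, ← Finset.sum_neg_distrib]
    refine Finset.sum_congr rfl fun n _ => ?_
    ring
  rw [h6] at h5
  exact h5

lemma aux_w {d N m : ℕ} (X : Fin N → EuclideanSpace ℝ (Fin d)) (y : Fin N → ℝ)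
    (A : Fin m → ℝ) (W : Fin m → EuclideanSpace ℝ (Fin d)) (i : Fin m) :
    HasGradientAt (fun v => netLoss X y A (Function.update W i v))
      (-(A i • ((N:ℝ)⁻¹ • ∑ n, (y n - ∑ j, A j * ∑ k, W j k * X n k) • X n))) (W i) := by
  rw [hasGradientAt_iff_hasFDerivAt]
  have hS : ∀ n (j : Fin m), HasFDerivAt
      (fun v : EuclideanSpace ℝ (Fin d) => A j * ∑ k, Function.update W i v j k * X n k)
      (if j = i then A i • (innerSL ℝ (X n)) else 0) (W i) := by
    intro n j
    by_cases h : j = i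
    · rw [if_pos h]; subst h
      have h0 := ((innerSL ℝ (X n)).hasFDerivAt (x := W j)).const_mul (A j)
      refine h0.congr_of_eventuallyEq (Filter.Eventually.of_forall fun v => ?_)
      simp only [Function.update_self, innerSL_apply_apply]
      rw [PiLp.inner_apply]
      congr 1
    · rw [if_neg h]
      simp only [Function.update_of_ne h]
      exact hasFDerivAt_const _ _
  have hsum : ∀ n, HasFDerivAt
      (fun v : EuclideanSpace ℝ (Fin d) => y n - ∑ j, A j * ∑ k, Function.update W i v j k * X n k)
      (-(A i • (innerSL ℝ (X n)))) (W i) := by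
    intro n
    have h1 := HasFDerivAt.fun_sum (fun j (_ : j ∈ Finset.univ) => hS n j)
    have h2 : (∑ j, if j = i then A i • (innerSL ℝ (X n)) else (0 : EuclideanSpace ℝ (Fin d) →L[ℝ] ℝ))
        = A i • (innerSL ℝ (X n)) := by simp
    rw [h2] at h1
    exact h1.const_sub (y n)
  have hpow : ∀ n, HasFDerivAt
      (fun v : EuclideanSpace ℝ (Fin d) =>
        (y n - ∑ j, A j * ∑ k, Function.update W i v j k * X n k) ^ 2)
      ((2 * (y n - ∑ j, A j * ∑ k, W j k * X n k)) • (-(A i • (innerSL ℝ (X n))))) (W i) := by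
    intro n
    have h3 := HasDerivAt.comp_hasFDerivAt (W i)
      (hasDerivAt_pow 2 ((fun v : EuclideanSpace ℝ (Fin d) =>
        y n - ∑ j, A j * ∑ k, Function.update W i v j k * X n k) (W i))) (hsum n)
    have h4 : (fun v : EuclideanSpace ℝ (Fin d) =>
        y n - ∑ j, A j * ∑ k, Function.update W i v j k * X n k) (W i)
        = y n - ∑ j, A j * ∑ k, W j k * X n k := by simp [Function.update_eq_self]
    rw [h4] at h3
    simpa [Function.comp_def] using h3
  have h5 := (HasFDerivAt.fun_sum (fun n (_ : n ∈ Finset.univ) => hpow n)).const_mul (1 / (2 * (N:ℝ)))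
  refine h5.congr_fderiv ?_
  ext h
  simp only [ContinuousLinearMap.smul_apply, ContinuousLinearMap.coe_sum', Finset.sum_apply,
    ContinuousLinearMap.neg_apply, innerSL_apply_apply, smul_eq_mul,
    InnerProductSpace.toDual_apply_apply, inner_neg_left, inner_smul_left, RCLike.conj_to_real,
    inner_sum, inner_smul_right, sum_inner, Finset.mul_sum]
  rw [← Finset.sum_neg_distrib]
  refine Finset.sum_congr rfl fun n _ => ?_
  ring

/-- for gradient flow on a two-layer linear network with strictly
balanced initialization `a(0)a(0)ᵀ = W(0)ᵀW(0)` and `w̃(0) = Σᵢ aᵢ(0)wᵢ(0) ≠ 0`, if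
the end-to-end predictor `w̃(t) = Σᵢ aᵢ(t)wᵢ(t)` converges to an interpolator `w̃∞`,
then `w̃∞` minimizes `w ↦ ‖w‖^{3/2} − (3/2)‖w̃(0)‖^{−1/2} w̃(0)ᵀw` over `{w : Xᵀw = y}`. -/
theorem stmt_12 {d N m : ℕ} (X : Fin N → EuclideanSpace ℝ (Fin d)) (y : Fin N → ℝ)
    (a : Fin m → ℝ → ℝ) (w : Fin m → ℝ → EuclideanSpace ℝ (Fin d))
    (hflow : ∀ t, 0 ≤ t → ∀ i : Fin m,
      HasDerivAt (a i)
        (-deriv (fun b => netLoss X y (Function.update (fun j => a j t) i b)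
          (fun j => w j t)) (a i t)) t ∧
      HasDerivAt (w i)
        (-gradient (fun v => netLoss X y (fun j => a j t)
          (Function.update (fun j => w j t) i v)) (w i t)) t)
    (hbal : ∀ i j : Fin m, ∑ k, w i 0 k * w j 0 k = a i 0 * a j 0)
    (hinit : (∑ i, a i 0 • w i 0) ≠ 0)
    (wInf : EuclideanSpace ℝ (Fin d))
    (hconv : Filter.Tendsto (fun t => ∑ i, a i t • w i t) Filter.atTop (nhds wInf))
    (hfit : ∀ n, ∑ j, X n j * wInf j = y n) :
    let w0 : EuclideanSpace ℝ (Fin d) := ∑ i, a i 0 • w i 0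
    let F : EuclideanSpace ℝ (Fin d) → ℝ := fun v =>
      ‖v‖ ^ ((3 : ℝ) / 2) - 3 / 2 * ‖w0‖ ^ (-(1 : ℝ) / 2) * ∑ j, w0 j * v j
    ∀ v : EuclideanSpace ℝ (Fin d),
      (∀ n, ∑ j, X n j * v j = y n) → F wInf ≤ F v := by
  intro w0 F v hv
  -- abbreviations
  set wt : ℝ → EuclideanSpace ℝ (Fin d) := fun t => ∑ i, a i t • w i t with hwt
  set g : ℝ → EuclideanSpace ℝ (Fin d) :=
    fun t => (N:ℝ)⁻¹ • ∑ n, (y n - ∑ j, a j t * ∑ k, w j t k * X n k) • X n with hg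
  set sg : ℝ → ℝ := fun t => ∑ i, (a i t)^2 with hsg
  -- coordinate sums are inner products
  have hip : ∀ (u x : EuclideanSpace ℝ (Fin d)), ⟪u, x⟫ = ∑ k, u k * x k := by
    intro u x
    rw [PiLp.inner_apply]
    exact Finset.sum_congr rfl fun k _ => by simp [RCLike.inner_apply, mul_comm]
  -- derivative of a i
  have hxw : ∀ (n : Fin N) (u : EuclideanSpace ℝ (Fin d)), ⟪X n, u⟫ = ∑ k, u k * X n k := by
    intro n u
    rw [hip]
    exact Finset.sum_congr rfl fun k _ => mul_comm _ _
  have F1 : ∀ t, 0 ≤ t → ∀ i, HasDerivAt (a i) (⟪g t, w i t⟫) t := by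
    intro t ht i
    have h := (hflow t ht i).1
    rw [(aux_a X y (fun j => a j t) (fun j => w j t) i).deriv, neg_neg] at h
    convert h using 1
    simp only [hg, real_inner_smul_left, sum_inner, hxw]
  -- derivative of w i
  have F2 : ∀ t, 0 ≤ t → ∀ i, HasDerivAt (w i) (a i t • g t) t := by
    intro t ht i
    have h := (hflow t ht i).2
    rw [(aux_w X y (fun j => a j t) (fun j => w j t) i).gradient, neg_neg] at h
    simpa only [hg] using h
  -- balancedness is conserved
  have F3 : ∀ t, 0 ≤ t → ∀ i j, ⟪w i t, w j t⟫ = a i t * a j t := by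
    intro t ht i j
    have hB : ∀ s, 0 ≤ s → HasDerivAt (fun u => ⟪w i u, w j u⟫ - a i u * a j u) 0 s := by
      intro s hs
      have h1 := HasDerivAt.inner ℝ (F2 s hs i) (F2 s hs j)
      have h2 := (F1 s hs i).mul (F1 s hs j)
      have h3 := h1.sub h2
      refine h3.congr_deriv (Eq.symm ?_)
      simp only [real_inner_smul_left, real_inner_smul_right]
      rw [real_inner_comm (g s) (w i s)]
      ring
    have hcont : ContinuousOn (fun u => ⟪w i u, w j u⟫ - a i u * a j u) (Set.Icc 0 t) :=
      fun s hs => ((hB s hs.1).continuousAt).continuousWithinAt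
    have hzero := constant_of_has_deriv_right_zero hcont
      (fun s hs => (hB s hs.1).hasDerivWithinAt) t (Set.mem_Icc.mpr ⟨ht, le_refl _⟩)
    have hb0 : ⟪w i 0, w j 0⟫ - a i 0 * a j 0 = 0 := by
      rw [hip]
      rw [hbal i j]
      ring
    rw [hb0] at hzero
    linarith [hzero]
  -- collinearity
  have F4 : ∀ t, 0 ≤ t → ∀ i j, a j t • w i t = a i t • w j t := by
    intro t ht i j
    rw [← sub_eq_zero, ← inner_self_eq_zero (𝕜 := ℝ)]
    simp only [inner_sub_left, inner_sub_right, real_inner_smul_left, real_inner_smul_right]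
    rw [F3 t ht i i, F3 t ht i j, F3 t ht j i, F3 t ht j j]
    ring
  -- norm of wt equals sg
  have F5 : ∀ t, 0 ≤ t → ‖wt t‖ = sg t := by
    intro t ht
    have h1 : ⟪wt t, wt t⟫ = sg t * sg t := by
      simp only [hwt, hsg, sum_inner, real_inner_smul_left, inner_sum, real_inner_smul_right]
      rw [Finset.sum_mul_sum]
      refine Finset.sum_congr rfl fun i _ => ?_
      refine Finset.sum_congr rfl fun j _ => ?_
      rw [F3 t ht j i]
      ring
    rw [real_inner_self_eq_norm_mul_norm (wt t)] at h1
    have hsgn : 0 ≤ sg t := Finset.sum_nonneg fun i _ => sq_nonneg _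
    nlinarith [norm_nonneg (wt t)]
  -- alignment with wt
  have F6 : ∀ t, 0 ≤ t → ∀ i, sg t • w i t = a i t • wt t := by
    intro t ht i
    have hterm : ∀ j, (a j t ^ 2) • w i t = a j t • (a i t • w j t) := by
      intro j
      rw [sq, ← smul_smul, F4 t ht i j]
    calc sg t • w i t = ∑ j, (a j t ^ 2) • w i t := by
          simp only [hsg]; exact Finset.sum_smul
      _ = ∑ j, a j t • (a i t • w j t) := Finset.sum_congr rfl fun j _ => hterm j
      _ = a i t • ∑ j, a j t • w j t := by
          rw [Finset.smul_sum]
          exact Finset.sum_congr rfl fun j _ => smul_comm _ _ _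
      _ = a i t • wt t := rfl
  -- derivative of sg
  have F7 : ∀ t, 0 ≤ t → HasDerivAt sg (2 * ⟪g t, wt t⟫) t := by
    intro t ht
    have h := HasDerivAt.fun_sum (fun i (_ : i ∈ Finset.univ) => ((F1 t ht i).pow 2))
    refine h.congr_deriv (Eq.symm ?_)
    simp only [pow_one, hwt, inner_sum, real_inner_smul_right, Finset.mul_sum]
    exact Finset.sum_congr rfl fun i _ => by ring
  -- derivative of wt
  have F8 : ∀ t, 0 ≤ t → HasDerivAt wt
      (∑ i, (a i t • (a i t • g t) + ⟪g t, w i t⟫ • w i t)) t := by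
    intro t ht
    exact HasDerivAt.fun_sum (fun i _ => (F1 t ht i).smul (F2 t ht i))
  -- boundedness of the trajectory
  obtain ⟨M, hM0, hM⟩ : ∃ M, 0 ≤ M ∧ ∀ t, 0 ≤ t → ‖wt t‖ ≤ M := by
    have hev : ∀ᶠ t in atTop, ‖wt t‖ ≤ ‖wInf‖ + 1 :=
      (hconv.norm).eventually (eventually_le_nhds (lt_add_one ‖wInf‖))
    obtain ⟨T, hT⟩ := eventually_atTop.mp hev
    have hcontwt : ContinuousOn wt (Set.Icc 0 (max T 0)) := fun s hs =>
      ((F8 s hs.1).continuousAt).continuousWithinAt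
    obtain ⟨C, hC⟩ := (isCompact_Icc (a := (0:ℝ)) (b := max T 0)).exists_bound_of_continuousOn hcontwt
    refine ⟨max C (‖wInf‖ + 1), ?_, ?_⟩
    · have : (0:ℝ) ≤ ‖wInf‖ + 1 := by positivity
      exact le_trans this (le_max_right _ _)
    · intro t ht
      rcases le_total t (max T 0) with h | h
      · exact le_trans (hC t ⟨ht, h⟩) (le_max_left _ _)
      · exact le_trans (hT t (le_trans (le_max_left T 0) h)) (le_max_right _ _)
  -- bound on g
  set K0 : ℝ := (N:ℝ)⁻¹ * ∑ n, (|y n| + M * ‖X n‖) * ‖X n‖ with hK0def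
  have hK00 : 0 ≤ K0 := by
    apply mul_nonneg (by positivity)
    exact Finset.sum_nonneg fun n _ => mul_nonneg
      (add_nonneg (abs_nonneg _) (mul_nonneg hM0 (norm_nonneg _))) (norm_nonneg _)
  have hgb : ∀ t, 0 ≤ t → ‖g t‖ ≤ K0 := by
    intro t ht
    have h1 : ∀ n : Fin N, ‖(y n - ∑ j, a j t * ∑ k, w j t k * X n k) • X n‖
        ≤ (|y n| + M * ‖X n‖) * ‖X n‖ := by
      intro n
      rw [norm_smul]
      apply mul_le_mul_of_nonneg_right _ (norm_nonneg _)
      have hS : (∑ j, a j t * ∑ k, w j t k * X n k) = ⟪wt t, X n⟫ := by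
        simp only [hwt, sum_inner, real_inner_smul_left]
        refine Finset.sum_congr rfl fun j _ => ?_
        rw [hip]
      rw [Real.norm_eq_abs, hS]
      have h2 : |⟪wt t, X n⟫| ≤ ‖wt t‖ * ‖X n‖ := abs_real_inner_le_norm _ _
      have h3 : ‖wt t‖ * ‖X n‖ ≤ M * ‖X n‖ :=
        mul_le_mul_of_nonneg_right (hM t ht) (norm_nonneg _)
      calc |y n - ⟪wt t, X n⟫| ≤ |y n| + |⟪wt t, X n⟫| := by
            rw [sub_eq_add_neg]
            exact le_trans (abs_add_le _ _) (by rw [abs_neg])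
        _ ≤ |y n| + M * ‖X n‖ := by linarith
    calc ‖g t‖ = (N:ℝ)⁻¹ * ‖∑ n, (y n - ∑ j, a j t * ∑ k, w j t k * X n k) • X n‖ := by
          simp only [hg, norm_smul, Real.norm_eq_abs]
          rw [abs_of_nonneg (by positivity)]
      _ ≤ (N:ℝ)⁻¹ * ∑ n, (|y n| + M * ‖X n‖) * ‖X n‖ := by
          apply mul_le_mul_of_nonneg_left _ (by positivity)
          exact le_trans (norm_sum_le _ _) (Finset.sum_le_sum fun n _ => h1 n)
  -- positivity of sg
  have hs0 : 0 < sg 0 := by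
    rw [← F5 0 le_rfl]
    exact norm_pos_iff.mpr hinit
  have F11 : ∀ t, 0 ≤ t → 0 < sg t := by
    intro t ht
    set K : ℝ := 2 * K0 with hKdef
    have hder : ∀ s, 0 ≤ s → HasDerivAt (fun u => sg u * Real.exp (K * u))
        ((2 * ⟪g s, wt s⟫ + K * sg s) * Real.exp (K * s)) s := by
      intro s hs
      have he : HasDerivAt (fun u => Real.exp (K * u)) (Real.exp (K * s) * K) s := by
        simpa [Function.comp_def] using (Real.hasDerivAt_exp (K * s)).comp s ((hasDerivAt_id s).const_mul K)
      have h := (F7 s hs).mul he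
      refine h.congr_deriv (Eq.symm ?_)
      ring
    have habs : ∀ s, 0 ≤ s → |2 * ⟪g s, wt s⟫| ≤ K * sg s := by
      intro s hs
      have h1 : |⟪g s, wt s⟫| ≤ ‖g s‖ * ‖wt s‖ := abs_real_inner_le_norm _ _
      have h2 : ‖g s‖ * ‖wt s‖ ≤ K0 * sg s := by
        rw [F5 s hs]
        exact mul_le_mul_of_nonneg_right (hgb s hs)
          (Finset.sum_nonneg fun i _ => sq_nonneg _)
      rw [abs_mul]
      calc |(2:ℝ)| * |⟪g s, wt s⟫| = 2 * |⟪g s, wt s⟫| := by rw [abs_two]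
        _ ≤ 2 * (K0 * sg s) := by linarith
        _ = K * sg s := by rw [hKdef]; ring
    have hmono : MonotoneOn (fun u => sg u * Real.exp (K * u)) (Set.Ici 0) := by
      apply monotoneOn_of_deriv_nonneg (convex_Ici 0)
      · exact fun s hs => ((hder s hs).continuousAt).continuousWithinAt
      · intro s hs
        rw [interior_Ici] at hs
        exact ((hder s hs.le).differentiableAt).differentiableWithinAt
      · intro s hs
        rw [interior_Ici] at hs
        rw [(hder s hs.le).deriv]
        have h4 := (abs_le.mp (habs s hs.le)).1
        have h5 : 0 ≤ 2 * ⟪g s, wt s⟫ + K * sg s := by linarith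
        exact mul_nonneg h5 (Real.exp_nonneg _)
    have h0 := hmono (Set.self_mem_Ici) (Set.mem_Ici.mpr ht) ht
    simp only [mul_zero, Real.exp_zero, mul_one] at h0
    nlinarith [Real.exp_pos (K * t)]
  -- orthogonality
  set c : EuclideanSpace ℝ (Fin d) := v - wInf with hc
  have hXc : ∀ n, ⟪X n, c⟫ = 0 := by
    intro n
    rw [hc, inner_sub_right]
    have h1 : ⟪X n, v⟫ = y n := by rw [hip]; exact hv n
    have h2 : ⟪X n, wInf⟫ = y n := by rw [hip]; exact hfit n
    rw [h1, h2, sub_self]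
  have hgc : ∀ t, ⟪g t, c⟫ = 0 := by
    intro t
    simp only [hg, real_inner_smul_left, sum_inner, hXc, mul_zero, Finset.sum_const_zero]
  -- the conserved quantity
  have hφ : ∀ t, 0 ≤ t → HasDerivAt (fun u => (⟪wt u, c⟫ : ℝ))
      (⟪g t, wt t⟫ * ⟪wt t, c⟫ / sg t) t := by
    intro t ht
    have h := HasDerivAt.inner ℝ (F8 t ht) (hasDerivAt_const t c)
    rw [inner_zero_right, zero_add] at h
    have hne := ne_of_gt (F11 t ht)
    have hkey1 : ∀ i, sg t * ⟪g t, w i t⟫ = a i t * ⟪g t, wt t⟫ := fun i => by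
      have h6 := congrArg (fun z => (⟪g t, z⟫ : ℝ)) (F6 t ht i)
      simpa only [real_inner_smul_right] using h6
    have hkey2 : ∀ i, sg t * ⟪w i t, c⟫ = a i t * ⟪wt t, c⟫ := fun i => by
      have h6 := congrArg (fun z => (⟪z, c⟫ : ℝ)) (F6 t ht i)
      simpa only [real_inner_smul_left] using h6
    have hterm : ∀ i ∈ Finset.univ, sg t * (⟪g t, w i t⟫ * ⟪w i t, c⟫) * sg t
        = (a i t ^ 2) * (⟪g t, wt t⟫ * ⟪wt t, c⟫) := by
      intro i _
      linear_combination (⟪w i t, c⟫ * sg t) * hkey1 i + (a i t * ⟪g t, wt t⟫) * hkey2 i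
    have hmul : sg t * (∑ i, ⟪g t, w i t⟫ * ⟪w i t, c⟫) * sg t
        = ⟪g t, wt t⟫ * ⟪wt t, c⟫ * sg t := by
      calc sg t * (∑ i, ⟪g t, w i t⟫ * ⟪w i t, c⟫) * sg t
          = ∑ i, sg t * (⟪g t, w i t⟫ * ⟪w i t, c⟫) * sg t := by
            rw [Finset.mul_sum Finset.univ (fun i => (⟪g t, w i t⟫ * ⟪w i t, c⟫ : ℝ)) (sg t),
              Finset.sum_mul Finset.univ (fun i => sg t * (⟪g t, w i t⟫ * ⟪w i t, c⟫ : ℝ)) (sg t)]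
        _ = ∑ i, (a i t ^ 2) * (⟪g t, wt t⟫ * ⟪wt t, c⟫) := Finset.sum_congr rfl hterm
        _ = (∑ i, a i t ^ 2) * (⟪g t, wt t⟫ * ⟪wt t, c⟫) :=
            (Finset.sum_mul Finset.univ (fun i => a i t ^ 2) _).symm
        _ = ⟪g t, wt t⟫ * ⟪wt t, c⟫ * sg t := by
            rw [show (∑ i, a i t ^ 2) = sg t from rfl]
            ring
    have hval : (⟪(∑ i, (a i t • (a i t • g t) + ⟪g t, w i t⟫ • w i t)), c⟫ : ℝ)
        = ∑ i, ⟪g t, w i t⟫ * ⟪w i t, c⟫ := by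
      rw [sum_inner]
      simp only [inner_add_left, real_inner_smul_left, hgc t, mul_zero, zero_add]
    rw [hval] at h
    refine h.congr_deriv (Eq.symm ?_)
    rw [div_eq_iff hne]
    linear_combination (mul_right_cancel₀ hne hmul).symm
  have hη : ∀ t, 0 ≤ t → HasDerivAt (fun u => (⟪wt u, c⟫ : ℝ) / Real.sqrt (sg u)) 0 t := by
    intro t ht
    have hpos := F11 t ht
    have hsq : Real.sqrt (sg t) ≠ 0 := by positivity
    have hd := (hφ t ht).div ((F7 t ht).sqrt (ne_of_gt hpos)) hsq
    refine hd.congr_deriv (Eq.symm ?_)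
    refine ((div_eq_zero_iff).mpr (Or.inl ?_)).symm
    set q := Real.sqrt (sg t) with hq
    have hG : q ^ 2 = sg t := Real.sq_sqrt (le_of_lt hpos)
    rw [← hG]
    have hq0 : q ≠ 0 := hsq
    field_simp
    ring
  have hconst : ∀ t, 0 ≤ t → (⟪wt t, c⟫ : ℝ) / Real.sqrt (sg t)
      = (⟪wt 0, c⟫ : ℝ) / Real.sqrt (sg 0) := by
    intro t ht
    have hcont : ContinuousOn (fun u => (⟪wt u, c⟫ : ℝ) / Real.sqrt (sg u)) (Set.Icc 0 t) :=
      fun s hs => ((hη s hs.1).continuousAt).continuousWithinAt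
    exact constant_of_has_deriv_right_zero hcont
      (fun s hs => (hη s hs.1).hasDerivWithinAt) t (Set.mem_Icc.mpr ⟨ht, le_refl _⟩)
  -- limits
  have hσlim : Tendsto sg atTop (nhds ‖wInf‖) := by
    exact Tendsto.congr' ((eventually_ge_atTop 0).mono fun t ht => F5 t ht) hconv.norm
  have hφlim : Tendsto (fun t => (⟪wt t, c⟫ : ℝ)) atTop (nhds (⟪wInf, c⟫)) :=
    hconv.inner tendsto_const_nhds
  have hkey : (⟪wt 0, c⟫ : ℝ) / Real.sqrt (sg 0) = ⟪wInf, c⟫ / Real.sqrt ‖wInf‖ := by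
    have hηlim : Tendsto (fun t => (⟪wt t, c⟫ : ℝ) / Real.sqrt (sg t)) atTop
        (nhds ((⟪wt 0, c⟫ : ℝ) / Real.sqrt (sg 0))) :=
      Tendsto.congr' ((eventually_ge_atTop 0).mono fun t ht => (hconst t ht).symm)
        tendsto_const_nhds
    by_cases hw : wInf = 0
    · have hsqlim : Tendsto (fun t => Real.sqrt (sg t)) atTop (nhds 0) := by
        have h1 := (Real.continuous_sqrt.tendsto ‖wInf‖).comp hσlim
        simpa [hw, Function.comp_def] using h1
      have hto0 : Tendsto (fun t => (⟪wt t, c⟫ : ℝ) / Real.sqrt (sg t)) atTop (nhds 0) := by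
        have hbound : ∀ᶠ (t:ℝ) in atTop,
            ‖(⟪wt t, c⟫ : ℝ) / Real.sqrt (sg t)‖ ≤ Real.sqrt (sg t) * ‖c‖ := by
          refine (eventually_ge_atTop 0).mono fun t ht => ?_
          have hpos := F11 t ht
          have hsq : 0 < Real.sqrt (sg t) := Real.sqrt_pos.mpr hpos
          rw [Real.norm_eq_abs, abs_div, abs_of_pos hsq, div_le_iff₀ hsq]
          have h1 : |(⟪wt t, c⟫ : ℝ)| ≤ ‖wt t‖ * ‖c‖ := abs_real_inner_le_norm _ _
          rw [F5 t ht] at h1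
          calc |(⟪wt t, c⟫ : ℝ)| ≤ sg t * ‖c‖ := h1
            _ = Real.sqrt (sg t) * ‖c‖ * Real.sqrt (sg t) := by
                conv_lhs => rw [← Real.mul_self_sqrt (le_of_lt hpos)]
                ring
        exact squeeze_zero_norm' hbound (by simpa using hsqlim.mul_const ‖c‖)
      have h0 := tendsto_nhds_unique hηlim hto0
      rw [h0, hw]
      simp
    · have hr : 0 < ‖wInf‖ := norm_pos_iff.mpr hw
      have hsq : Real.sqrt ‖wInf‖ ≠ 0 := by positivity
      have hlim2 : Tendsto (fun t => (⟪wt t, c⟫ : ℝ) / Real.sqrt (sg t)) atTop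
          (nhds ((⟪wInf, c⟫ : ℝ) / Real.sqrt ‖wInf‖)) :=
        hφlim.div ((Real.continuous_sqrt.tendsto ‖wInf‖).comp hσlim) hsq
      exact tendsto_nhds_unique hηlim hlim2
  -- final computation
  have hw0pos : (0:ℝ) < ‖wt 0‖ := norm_pos_iff.mpr hinit
  have hq : 0 < Real.sqrt ‖wt 0‖ := Real.sqrt_pos.mpr hw0pos
  have hsg0 : sg 0 = ‖wt 0‖ := (F5 0 le_rfl).symm
  have hrpow : ‖wt 0‖ ^ (-(1:ℝ)/2) = (Real.sqrt ‖wt 0‖)⁻¹ := by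
    rw [neg_div, Real.rpow_neg (norm_nonneg _), Real.sqrt_eq_rpow]
  show ‖wInf‖ ^ ((3:ℝ)/2) - 3/2 * ‖wt 0‖ ^ (-(1:ℝ)/2) * ∑ j, (wt 0) j * wInf j
      ≤ ‖v‖ ^ ((3:ℝ)/2) - 3/2 * ‖wt 0‖ ^ (-(1:ℝ)/2) * ∑ j, (wt 0) j * v j
  rw [← hip (wt 0) wInf, ← hip (wt 0) v, hrpow]
  have hdiff : (⟪wt 0, v⟫ : ℝ) - ⟪wt 0, wInf⟫ = ⟪wt 0, c⟫ := by
    rw [hc, inner_sub_right]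
  have hkey2 : (Real.sqrt ‖wt 0‖)⁻¹ * ((⟪wt 0, v⟫ : ℝ) - ⟪wt 0, wInf⟫)
      = ⟪wInf, c⟫ / Real.sqrt ‖wInf‖ := by
    rw [hdiff, inv_mul_eq_div, ← hsg0, hkey]
  have hmain : 3/2 * ((⟪wInf, c⟫ : ℝ) / Real.sqrt ‖wInf‖)
      ≤ ‖v‖ ^ ((3:ℝ)/2) - ‖wInf‖ ^ ((3:ℝ)/2) := by
    by_cases hw : wInf = 0
    · rw [hw]
      simp only [inner_zero_left, zero_div, mul_zero, norm_zero]
      rw [Real.zero_rpow (by norm_num : ((3:ℝ)/2) ≠ 0)]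
      have := Real.rpow_nonneg (norm_nonneg v) ((3:ℝ)/2)
      linarith
    · set r : ℝ := ‖wInf‖ with hrdef
      set sN : ℝ := ‖v‖ with hsdef
      have hrpos : 0 < r := norm_pos_iff.mpr hw
      have hsN : 0 ≤ sN := norm_nonneg _
      have hqr : 0 < Real.sqrt r := Real.sqrt_pos.mpr hrpos
      have hic : (⟪wInf, c⟫ : ℝ) ≤ r * sN - r * r := by
        rw [hc, inner_sub_right]
        have h1 : (⟪wInf, v⟫ : ℝ) ≤ r * sN := real_inner_le_norm wInf v
        have h2 : (⟪wInf, wInf⟫ : ℝ) = r * r := real_inner_self_eq_norm_mul_norm wInf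
        linarith
      have hr32 : r ^ ((3:ℝ)/2) = r * Real.sqrt r := by
        rw [Real.sqrt_eq_rpow, ← Real.rpow_one_add' (le_of_lt hrpos) (by norm_num)]
        norm_num
      have hdivr : (r * sN - r * r) / Real.sqrt r = sN * Real.sqrt r - r ^ ((3:ℝ)/2) := by
        rw [hr32]
        set q2 := Real.sqrt r with hq2def
        have hq2 : q2 ^ 2 = r := Real.sq_sqrt (le_of_lt hrpos)
        rw [← hq2]
        have hq0 : q2 ≠ 0 := ne_of_gt hqr
        field_simp
      have hamgm : sN * Real.sqrt r ≤ 2/3 * sN ^ ((3:ℝ)/2) + 1/3 * r ^ ((3:ℝ)/2) := by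
        have h3 := Real.geom_mean_le_arith_mean2_weighted
          (w₁ := 2/3) (w₂ := 1/3) (p₁ := sN ^ ((3:ℝ)/2)) (p₂ := r ^ ((3:ℝ)/2))
          (by norm_num) (by norm_num) (Real.rpow_nonneg hsN ((3:ℝ)/2))
          (Real.rpow_nonneg (le_of_lt hrpos) ((3:ℝ)/2)) (by norm_num)
        have h4 : (sN ^ ((3:ℝ)/2)) ^ ((2:ℝ)/3) = sN := by
          rw [← Real.rpow_mul hsN]
          norm_num
        have h5 : (r ^ ((3:ℝ)/2)) ^ ((1:ℝ)/3) = Real.sqrt r := by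
          rw [← Real.rpow_mul (le_of_lt hrpos), Real.sqrt_eq_rpow]
          norm_num
        rw [h4, h5] at h3
        exact h3
      calc 3/2 * ((⟪wInf, c⟫ : ℝ) / Real.sqrt r)
          ≤ 3/2 * ((r * sN - r * r) / Real.sqrt r) := by
            apply mul_le_mul_of_nonneg_left _ (by norm_num)
            exact (div_le_div_iff_of_pos_right hqr).mpr hic
        _ = 3/2 * (sN * Real.sqrt r - r ^ ((3:ℝ)/2)) := by rw [hdivr]
        _ ≤ sN ^ ((3:ℝ)/2) - r ^ ((3:ℝ)/2) := by linarith
  have e3 : 3/2 * (Real.sqrt ‖wt 0‖)⁻¹ * (⟪wt 0, v⟫ : ℝ)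
      - 3/2 * (Real.sqrt ‖wt 0‖)⁻¹ * (⟪wt 0, wInf⟫ : ℝ)
      = 3/2 * ((⟪wInf, c⟫ : ℝ) / Real.sqrt ‖wInf‖) := by
    linear_combination (3/2 : ℝ) * hkey2
  linarith [hmain, e3]
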